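/- arXiv:1503.04975 — 5 statements merged into one kernel-verified Lean document; each statement's English description precedes it below -/
import Mathlib

section
/- Let R be a ring in which every element is either a unit or a zero divisor. If (a, b) ∈ R² is non-unimodular and R(a, b) is a free cyclic submodule of R², then (a, b) is an outlier. -/
/-- In a ring where every element is a unit or has a nonzero left annihilator:
if `(a, b)` is non-unimodular and `R(a, b)` is free, then `(a, b)` is an outlier. -/
theorem stmt_10 {R : Type*} [Ring R]
    (hF : ∀ u : R, IsUnit u ∨ ∃ c : R, c ≠ 0 ∧ c * u = 0)
    (a b : R)
    (hnu : ¬ ∃ u v : R, a * u + b * v = 1)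
    (hfree : ∀ r : R, r * a = 0 → r * b = 0 → r = 0) :
    ¬ ∃ r x y : R, (∃ u v : R, x * u + y * v = 1) ∧ a = r * x ∧ b = r * y := by
  rintro ⟨r, x, y, ⟨u, v, huv⟩, ha, hb⟩
  rcases hF r with hr | ⟨c, hc, hcr⟩
  · obtain ⟨w, hw⟩ := hr.exists_right_inv
    exact hnu ⟨u * w, v * w, by
      rw [ha, hb]
      calc r * x * (u * w) + r * y * (v * w) = r * (x * u + y * v) * w := by noncomm_ring
        _ = 1 := by rw [huv, mul_one, hw]⟩
  · exact hc (hfree c (by rw [ha, ← mul_assoc, hcr, zero_mul])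
      (by rw [hb, ← mul_assoc, hcr, zero_mul]))
end

section
/- Let R₁, ..., Rₙ be rings and R = R₁ × ... × Rₙ. A pair ((a₁,...,aₙ), (b₁,...,bₙ)) ∈ R² is an outlier if and only if there exists some i with (aᵢ, bᵢ) ∈ Rᵢ² an outlier. -/
/-- In a direct product of rings, a pair is an outlier iff some component pair
is an outlier. -/
theorem stmt_14 {n : ℕ} (R : Fin n → Type*) [∀ i, Ring (R i)]
    (a b : ∀ i, R i) :
    (¬ ∃ r x y : ∀ i, R i,
        (∃ u v : ∀ i, R i, x * u + y * v = 1) ∧ a = r * x ∧ b = r * y) ↔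
      ∃ i, ¬ ∃ r x y : R i,
        (∃ u v : R i, x * u + y * v = 1) ∧ a i = r * x ∧ b i = r * y := by
  constructor
  · intro h
    by_contra hc
    push_neg at hc
    choose r x y h' using hc
    choose u v huv using fun i => (h' i).1
    exact h ⟨r, x, y, ⟨u, v, funext fun i => huv i⟩,
      funext fun i => (h' i).2.1, funext fun i => (h' i).2.2⟩
  · rintro ⟨i, hi⟩ ⟨r, x, y, ⟨u, v, huv⟩, ha, hb⟩
    exact hi ⟨r i, x i, y i, ⟨u i, v i, congrFun huv i⟩,
      congrFun ha i, congrFun hb i⟩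
end

section
/- If R is a finite commutative ring and R(a, b) ⊆ R² is a free cyclic submodule, then (a, b) is unimodular: there exist x, y ∈ R with ax + by = 1. -/
/-- In a finite monoid, some positive power of any element is idempotent. -/
lemma exists_idem_pow {R : Type*} [Monoid R] [Finite R] (a : R) :
    ∃ n : ℕ, 0 < n ∧ a ^ n * a ^ n = a ^ n := by
  obtain ⟨i, j, hij, h⟩ := Finite.exists_ne_map_eq_of_infinite (fun k : ℕ => a ^ k)
  wlog hlt : i < j generalizing i j
  · exact this j i hij.symm h.symm (by omega)
  set d := j - i with hd
  have hd1 : 1 ≤ d := by omega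
  have hstep : ∀ t : ℕ, a ^ (i + t * d) = a ^ i := by
    intro t
    induction t with
    | zero => simp
    | succ t ih =>
      have h1 : i + (t + 1) * d = (i + t * d) + d := by ring
      have h2 : i + d = j := by omega
      rw [h1, pow_add, ih, ← pow_add, h2, ← h]
  have hgen : ∀ s t : ℕ, i ≤ s → a ^ (s + t * d) = a ^ s := by
    intro s t hs
    have h1 : s + t * d = (s - i) + (i + t * d) := by omega
    have h2 : (s - i) + i = s := by omega
    rw [h1, pow_add, hstep, ← pow_add, h2]
  refine ⟨(i + 1) * d, by positivity, ?_⟩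
  rw [← pow_add]
  exact hgen ((i + 1) * d) (i + 1) (by nlinarith)

/-- In a finite commutative ring, every free cyclic submodule `R(a, b) ⊆ R²` is
generated by a unimodular pair. -/
theorem stmt_16 {R : Type*} [CommRing R] [Finite R] (a b : R)
    (hfree : ∀ r : R, r * a = 0 → r * b = 0 → r = 0) :
    ∃ x y : R, a * x + b * y = 1 := by
  obtain ⟨n, hn, he⟩ := exists_idem_pow a
  obtain ⟨m, hm, hf⟩ := exists_idem_pow b
  set e := a ^ n
  set f := b ^ m
  set u := (1 - e) * (1 - f) with hu
  -- key: u * a^i * b^j = 0 for all i j, by downward induction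
  have key : ∀ k i j : ℕ, n + m ≤ i + j + k → u * a ^ i * b ^ j = 0 := by
    intro k
    induction k with
    | zero =>
      intro i j hij
      rcases le_or_gt n i with hi | hi
      · have : a ^ i = e * a ^ (i - n) := by
          show a ^ i = a ^ n * a ^ (i - n); rw [← pow_add]; congr 1; omega
        rw [this, hu]
        have : (1 - e) * (1 - f) * (e * a ^ (i - n)) * b ^ j
            = ((1 - e) * e) * ((1 - f) * (a ^ (i - n) * b ^ j)) := by ring
        rw [this, sub_mul, one_mul, he, sub_self, zero_mul]
      · have hj : m ≤ j := by omega
        have : b ^ j = f * b ^ (j - m) := by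
          show b ^ j = b ^ m * b ^ (j - m); rw [← pow_add]; congr 1; omega
        rw [this, hu]
        have : (1 - e) * (1 - f) * a ^ i * (f * b ^ (j - m))
            = ((1 - f) * f) * ((1 - e) * (a ^ i * b ^ (j - m))) := by ring
        rw [this, sub_mul, one_mul, hf, sub_self, zero_mul]
    | succ k ih =>
      intro i j hij
      refine hfree _ ?_ ?_
      · have := ih (i + 1) j (by omega)
        calc u * a ^ i * b ^ j * a = u * a ^ (i + 1) * b ^ j := by ring
        _ = 0 := this
      · have := ih i (j + 1) (by omega)
        calc u * a ^ i * b ^ j * b = u * a ^ i * b ^ (j + 1) := by ring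
        _ = 0 := this
  have hu0 : u = 0 := by
    have := key (n + m) 0 0 (by omega)
    simpa using this
  -- u = (1-e)(1-f) = 1 - e - f + e f = 0  ⇒  e + f - e f = 1
  refine ⟨a ^ (n - 1), b ^ (m - 1) * (1 - e), ?_⟩
  have ha' : a * a ^ (n - 1) = e := by
    show a * a ^ (n - 1) = a ^ n
    rw [← pow_succ']; congr 1; omega
  have hb' : b * b ^ (m - 1) = f := by
    show b * b ^ (m - 1) = b ^ m
    rw [← pow_succ']; congr 1; omega
  have : b * (b ^ (m - 1) * (1 - e)) = f * (1 - e) := by rw [← mul_assoc, hb']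
  rw [this, ha']
  have : e + f * (1 - e) = 1 - u := by rw [hu]; ring
  rw [this, hu0, sub_zero]
end

section
/- Let R be the ring of matrices of the form [[a,0,0],[b,a,0],[c,0,d]] with a, b, c, d ∈ GF(2), let A = [[1,0,0],[1,1,0],[1,0,0]] and I₀ = [[0,0,0],[1,0,0],[1,0,0]]. Then the left cyclic submodule R(I₀, A) of R² is free: if M ∈ R satisfies M·I₀ = 0 and M·A = 0, then M = 0. -/
/-- In the ring `R = {[[a,0,0],[b,a,0],[c,0,d]] : a,b,c,d ∈ GF(2)}`, the left cyclic
submodule generated by the pair `(I₀, A)` is free. -/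
theorem stmt_17
    (A I₀ : Matrix (Fin 3) (Fin 3) (ZMod 2))
    (hA : A = !![1, 0, 0; 1, 1, 0; 1, 0, 0])
    (hI₀ : I₀ = !![0, 0, 0; 1, 0, 0; 1, 0, 0]) :
    ∀ M : Matrix (Fin 3) (Fin 3) (ZMod 2),
      (M 0 1 = 0 ∧ M 0 2 = 0 ∧ M 1 1 = M 0 0 ∧ M 1 2 = 0 ∧ M 2 1 = 0) →
      M * I₀ = 0 → M * A = 0 → M = 0 := by
  rintro M ⟨h1, h2, h3, h4, h5⟩ hMI hMA
  subst hA hI₀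
  have e0 := congrFun (congrFun hMI 0) 0
  have e1 := congrFun (congrFun hMA 0) 0
  have e2 := congrFun (congrFun hMA 1) 0
  have e3 := congrFun (congrFun hMA 2) 0
  have e4 := congrFun (congrFun hMI 2) 0
  simp [Matrix.mul_apply, Fin.sum_univ_three, h1, h2, h3, h4, h5, Matrix.vecHead, Matrix.vecTail] at e0 e1 e2 e3 e4
  ext i j
  fin_cases i <;> fin_cases j <;>
    simp_all [Fin.sum_univ_three, Matrix.vecHead, Matrix.vecTail]
end

section
/- Let F be a field, T₃ the ring of lower triangular 3×3 matrices over F, X = [[1,0,0],[0,1,0],[0,0,0]] and Y = [[0,0,0],[0,0,0],[0,1,0]]. Then the pair (X, Y) ∈ T₃² is not right unimodular, yet the left cyclic submodule T₃(X, Y) is free: M·X = 0 and M·Y = 0 for M ∈ T₃ imply M = 0. -/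
/-- In the ring `T₃` of lower triangular `3×3` matrices over a field `F`, the pair
`(X, Y)` below is not right unimodular, but generates a free left cyclic submodule. -/
theorem stmt_18 (F : Type*) [Field F]
    (X Y : Matrix (Fin 3) (Fin 3) F)
    (hX : X = !![1, 0, 0; 0, 1, 0; 0, 0, 0])
    (hY : Y = !![0, 0, 0; 0, 0, 0; 0, 1, 0]) :
    (¬ ∃ P Q : Matrix (Fin 3) (Fin 3) F,
        (∀ i j, i < j → P i j = 0) ∧ (∀ i j, i < j → Q i j = 0) ∧
        X * P + Y * Q = 1) ∧
    (∀ M : Matrix (Fin 3) (Fin 3) F, (∀ i j, i < j → M i j = 0) →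
        M * X = 0 → M * Y = 0 → M = 0) := by
  subst hX hY
  constructor
  · rintro ⟨P, Q, hP, hQ, h⟩
    have h22 := congrFun (congrFun h 2) 2
    have hQ12 : Q 1 2 = 0 := hQ 1 2 (by decide)
    simp [Matrix.mul_apply, Matrix.vecMul, dotProduct, Fin.sum_univ_three, Matrix.one_apply, Matrix.vecHead, Matrix.vecTail, hQ12] at h22
  · intro M hM hMX hMY
    ext i j
    have hX' := fun j' => congrFun (congrFun hMX i) j'
    have hY1 := congrFun (congrFun hMY i) 1
    simp [Matrix.mul_apply, Fin.sum_univ_three] at hX' hY1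
    have h0 := hX' 0
    have h1 := hX' 1
    simp at h0 h1
    fin_cases j <;> simp_all
end
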